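/- (Corollary 8, multi-tier dense-deployment bound.) Fix α > 2, an integer T ≥ 1, a tier index t ∈ {1, …, T}, and for each q ∈ {1, …, T}: P_q > 0, B_q > 0, κ_q > 0, an integer F_q ≥ 1, and SNR_q > 0. Let X_t and g_1, …, g_T be nonnegative random variables with X_t integrable and E[g_q^{2/α}] < ∞ for all q. Set M_{t,0}(z) = E[exp(-z·X_t)], M_{q,I}(z) = E[exp(-z·g_q)], and T_{q,I}(z) = z^{2/α}·E[g_q^{2/α}·γ(1 − 2/α, z·g_q)]. With w_q = (P_q·B_q/(P_t·B_t))^{-1}·SNR_q, define Z̃^{(t)}(y) = Σ_{q=1}^T (κ_q·F_t/(F_q·κ_t))·(P_q·B_q/(P_t·B_t))^{2/α}·[(F_q − 1) + M_{q,I}(w_q·y) + T_{q,I}(w_q·y)] > 0, and for λ > 0 define the tier-t average rate R̃_t(λ) = ∫₀^∞ (1 − M_{t,0}(SNR_t·y))·(G̃(y, λ)/y) dy, where G̃(y, λ) = Z̃^{(t)}(y)^{-1} − (α/2)·(y/Z̃^{(t)}(y))·∫₀^∞ ξ^{α/2−1}·exp(-π·(κ_t·λ/F_t)·Z̃^{(t)}(y)·ξ)·exp(-y·ξ^{α/2})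 dξ (all integrals valued in [0, ∞]). Then λ ↦ R̃_t(λ) is monotonically nondecreasing, R̃_t(λ) ≤ R̃_t^{(λ∞)} := ∫₀^∞ (1 − M_{t,0}(SNR_t·y))/(y·Z̃^{(t)}(y)) dy for every λ > 0, and lim_{λ→∞} R̃_t(λ) = R̃_t^{(λ∞)} (equality in [0, ∞]). -/

import Mathlib

open MeasureTheory Real Set Filter
open scoped ENNReal Topology

/-- The lower incomplete gamma function `γ(a, x) = ∫₀^x s^{a-1} e^{-s} ds`. -/
noncomputable def lowerGamma (a x : ℝ) : ℝ :=
  ∫ s in Set.Ioc (0 : ℝ) x, s ^ (a - 1) * Real.exp (-s)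


lemma lowerGamma_nonneg (a x : ℝ) : 0 ≤ lowerGamma a x := by
  apply setIntegral_nonneg measurableSet_Ioc
  intro s hs
  have hs0 : 0 < s := hs.1
  positivity

lemma integrableOn_lowerGamma_aux {a : ℝ} (ha : 0 < a) :
    IntegrableOn (fun s : ℝ => s ^ (a - 1) * Real.exp (-s)) (Ioi 0) :=
  (Real.GammaIntegral_convergent ha).congr_fun (fun s _ => mul_comm _ _) measurableSet_Ioi

lemma lowerGamma_mono {a : ℝ} (ha : 0 < a) : Monotone (lowerGamma a) := by
  intro x₁ x₂ h
  unfold lowerGamma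
  apply setIntegral_mono_set ((integrableOn_lowerGamma_aux ha).mono_set Ioc_subset_Ioi_self)
  · filter_upwards [ae_restrict_mem measurableSet_Ioc] with s hs
    have hs0 : 0 < s := hs.1
    positivity
  · exact HasSubset.Subset.eventuallyLE (Ioc_subset_Ioc_right h)

lemma lowerGamma_le_Gamma {a : ℝ} (ha : 0 < a) (x : ℝ) :
    lowerGamma a x ≤ Real.Gamma a := by
  rw [Real.Gamma_eq_integral ha]
  have h1 : ∫ s in Ioi (0:ℝ), Real.exp (-s) * s ^ (a - 1)
      = ∫ s in Ioi (0:ℝ), s ^ (a - 1) * Real.exp (-s) :=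
    setIntegral_congr_fun measurableSet_Ioi fun s _ => mul_comm _ _
  rw [h1]
  apply setIntegral_mono_set (integrableOn_lowerGamma_aux ha)
  · filter_upwards [ae_restrict_mem measurableSet_Ioi] with s hs
    have hs0 : 0 < s := hs
    positivity
  · exact HasSubset.Subset.eventuallyLE Ioc_subset_Ioi_self

lemma exp_neg_integrable {Ω : Type*} [MeasurableSpace Ω] (μ : Measure Ω)
    [IsProbabilityMeasure μ] {X : Ω → ℝ} (hX : Measurable X) (hXnn : ∀ ω, 0 ≤ X ω)
    {z : ℝ} (hz : 0 ≤ z) : Integrable (fun ω => Real.exp (-(z * X ω))) μ := by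
  refine Integrable.mono' (integrable_const 1)
    ((hX.const_mul z).neg.exp.aestronglyMeasurable) ?_
  filter_upwards with ω
  rw [Real.norm_eq_abs, abs_of_pos (Real.exp_pos _)]
  exact Real.exp_le_one_iff.2 (neg_nonpos.2 (mul_nonneg hz (hXnn ω)))

lemma exp_neg_integral_le_one {Ω : Type*} [MeasurableSpace Ω] (μ : Measure Ω)
    [IsProbabilityMeasure μ] {X : Ω → ℝ} (hX : Measurable X) (hXnn : ∀ ω, 0 ≤ X ω)
    {z : ℝ} (hz : 0 ≤ z) : (∫ ω, Real.exp (-(z * X ω)) ∂μ) ≤ 1 := by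
  calc (∫ ω, Real.exp (-(z * X ω)) ∂μ) ≤ ∫ _, (1:ℝ) ∂μ := by
        apply integral_mono (exp_neg_integrable μ hX hXnn hz) (integrable_const 1)
        intro ω
        exact Real.exp_le_one_iff.2 (neg_nonpos.2 (mul_nonneg hz (hXnn ω)))
    _ = 1 := by simp

lemma exp_neg_integral_anti {Ω : Type*} [MeasurableSpace Ω] (μ : Measure Ω)
    [IsProbabilityMeasure μ] {X : Ω → ℝ} (hX : Measurable X) (hXnn : ∀ ω, 0 ≤ X ω)
    {z₁ z₂ : ℝ} (h0 : 0 ≤ z₁) (h : z₁ ≤ z₂) :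
    (∫ ω, Real.exp (-(z₂ * X ω)) ∂μ) ≤ ∫ ω, Real.exp (-(z₁ * X ω)) ∂μ := by
  apply integral_mono (exp_neg_integrable μ hX hXnn (h0.trans h)) (exp_neg_integrable μ hX hXnn h0)
  intro ω
  exact Real.exp_le_exp.2 (neg_le_neg (mul_le_mul_of_nonneg_right h (hXnn ω)))

/-- Corollary 8 (equation (26)): in a `T`-tier network with common path-loss exponent `α`,
tier-`q` powers `P q`, biases `B q`, density coefficients `κ q`, frequency bands `F q`
with random frequency reuse and per-tier SNRs `SNR q`, the tier-`t` average rate `R̃_t(λ)`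
is nondecreasing in the common density parameter `λ`, is bounded above by
`R̃_t^{(λ∞)} = ∫₀^∞ (1 - M_{t,0}(SNR_t y))/(y Z̃^{(t)}(y)) dy`, and tends to this bound
as `λ → ∞`. -/
theorem multi_tier_average_rate_dense_limit
    {Ω : Type*} [MeasurableSpace Ω] (μ : Measure Ω) [IsProbabilityMeasure μ]
    (α : ℝ) (hα : 2 < α) (T : ℕ) (hT : 1 ≤ T) (t : Fin T)
    (P B κ : Fin T → ℝ) (F : Fin T → ℕ) (SNR : Fin T → ℝ)
    (hP : ∀ q, 0 < P q) (hB : ∀ q, 0 < B q) (hκ : ∀ q, 0 < κ q)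
    (hF : ∀ q, 1 ≤ F q) (hSNR : ∀ q, 0 < SNR q)
    (Xt : Ω → ℝ) (g : Fin T → Ω → ℝ)
    (hXt : Measurable Xt) (hg : ∀ q, Measurable (g q))
    (hXtnn : ∀ ω, 0 ≤ Xt ω) (hgnn : ∀ q ω, 0 ≤ g q ω)
    (hXtint : Integrable Xt μ) (hgint : ∀ q, Integrable (fun ω => g q ω ^ (2 / α)) μ)
    (Mt0 : ℝ → ℝ) (MI TI : Fin T → ℝ → ℝ)
    (hMt0 : ∀ z, Mt0 z = ∫ ω, Real.exp (-(z * Xt ω)) ∂μ)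
    (hMI : ∀ q z, MI q z = ∫ ω, Real.exp (-(z * g q ω)) ∂μ)
    (hTI : ∀ q z, TI q z =
        z ^ (2 / α) * ∫ ω, g q ω ^ (2 / α) * lowerGamma (1 - 2 / α) (z * g q ω) ∂μ)
    (Zt : ℝ → ℝ)
    (hZt : ∀ y, Zt y = ∑ q : Fin T,
        (κ q * (F t : ℝ) / ((F q : ℝ) * κ t)) *
          (P q * B q / (P t * B t)) ^ (2 / α) *
          (((F q : ℝ) - 1) + MI q ((P q * B q / (P t * B t))⁻¹ * SNR q * y)
            + TI q ((P q * B q / (P t * B t))⁻¹ * SNR q * y)))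
    (hZtpos : ∀ y, 0 < Zt y)
    (Gt : ℝ → ℝ → ℝ)
    (hGt : ∀ y lam, Gt y lam = (Zt y)⁻¹ - (α / 2) * (y / Zt y) *
        ∫ ξ in Set.Ioi (0 : ℝ),
          ξ ^ (α / 2 - 1) * Real.exp (-(π * (κ t * lam / (F t : ℝ)) * Zt y * ξ)) *
            Real.exp (-(y * ξ ^ (α / 2))))
    (R : ℝ → ℝ≥0∞)
    (hR : ∀ lam, R lam = ∫⁻ y in Set.Ioi (0 : ℝ),
        ENNReal.ofReal ((1 - Mt0 (SNR t * y)) * (Gt y lam / y))) :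
    (∀ lam₁ lam₂ : ℝ, 0 < lam₁ → lam₁ ≤ lam₂ → R lam₁ ≤ R lam₂)
    ∧ (∀ lam : ℝ, 0 < lam →
        R lam ≤ ∫⁻ y in Set.Ioi (0 : ℝ),
          ENNReal.ofReal ((1 - Mt0 (SNR t * y)) / (y * Zt y)))
    ∧ Tendsto R atTop
        (nhds (∫⁻ y in Set.Ioi (0 : ℝ),
          ENNReal.ofReal ((1 - Mt0 (SNR t * y)) / (y * Zt y)))) := by
  have hα0 : (0:ℝ) < α := by linarith
  have hp1 : 1 < α / 2 := by linarith
  have hp0 : 0 < α / 2 := by linarith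
  have h2α : 0 < 2 / α := by positivity
  have h2α1 : 2 / α < 1 := by rw [div_lt_one hα0]; linarith
  have ha : 0 < 1 - 2 / α := by linarith
  have hFq : ∀ q, (0:ℝ) < (F q : ℝ) := fun q => by
    exact_mod_cast Nat.lt_of_lt_of_le Nat.zero_lt_one (hF q)
  have hπ : (0:ℝ) < π := Real.pi_pos
  -- weights
  set w : Fin T → ℝ := fun q => (P q * B q / (P t * B t))⁻¹ * SNR q with hw_def
  have hw : ∀ q, 0 < w q := fun q => by
    have h1 := hP q; have h2 := hB q; have h3 := hP t; have h4 := hB t; have h5 := hSNR q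
    rw [hw_def]; positivity
  -- bound on Mt0
  have hM_le_one : ∀ z : ℝ, 0 ≤ z → Mt0 z ≤ 1 := fun z hz => by
    rw [hMt0]; exact exp_neg_integral_le_one μ hXt hXtnn hz
  have h1M : ∀ y : ℝ, 0 < y → 0 ≤ 1 - Mt0 (SNR t * y) := fun y hy => by
    have := hM_le_one (SNR t * y) (mul_nonneg (hSNR t).le hy.le)
    linarith
  -- clamp
  set m : ℝ → ℝ := fun y => max y 0 with hm_def
  have hm_nonneg : ∀ y, 0 ≤ m y := fun y => le_max_right _ _
  have hm_mono : Monotone m := fun a b h => max_le_max h le_rfl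
  have hm_eq : ∀ y : ℝ, 0 < y → m y = y := fun y hy => max_eq_left hy.le
  -- clamped Mt0
  set Mc : ℝ → ℝ := fun y => Mt0 (SNR t * m y) with hMc_def
  have hMc_anti : Antitone Mc := by
    intro y₁ y₂ h
    simp only [hMc_def, hMt0]
    exact exp_neg_integral_anti μ hXt hXtnn (mul_nonneg (hSNR t).le (hm_nonneg y₁))
      (mul_le_mul_of_nonneg_left (hm_mono h) (hSNR t).le)
  have hMc_meas : Measurable Mc := hMc_anti.measurable
  have hMc_eq : ∀ y : ℝ, 0 < y → Mc y = Mt0 (SNR t * y) := fun y hy => by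
    rw [hMc_def]; simp only [hm_eq y hy]
  -- clamped MI
  set A : Fin T → ℝ → ℝ := fun q y => MI q (w q * m y) with hA_def
  have hA_anti : ∀ q, Antitone (A q) := by
    intro q y₁ y₂ h
    simp only [hA_def, hMI]
    exact exp_neg_integral_anti μ (hg q) (hgnn q) (mul_nonneg (hw q).le (hm_nonneg y₁))
      (mul_le_mul_of_nonneg_left (hm_mono h) (hw q).le)
  -- clamped TI
  set Bf : Fin T → ℝ → ℝ := fun q y => TI q (w q * m y) with hBf_def
  have hTIint : ∀ q (z : ℝ),
      Integrable (fun ω => g q ω ^ (2 / α) * lowerGamma (1 - 2 / α) (z * g q ω)) μ := by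
    intro q z
    refine Integrable.mono' ((hgint q).mul_const (Real.Gamma (1 - 2 / α))) ?_ ?_
    · have hgr : Measurable fun ω => g q ω ^ (2 / α) :=
        (Real.continuous_rpow_const h2α.le).measurable.comp (hg q)
      exact (hgr.mul
        (((lowerGamma_mono ha).measurable).comp ((hg q).const_mul z))).aestronglyMeasurable
    · filter_upwards with ω
      rw [Real.norm_eq_abs, abs_of_nonneg
        (mul_nonneg (Real.rpow_nonneg (hgnn q ω) _) (lowerGamma_nonneg _ _))]
      exact mul_le_mul_of_nonneg_left (lowerGamma_le_Gamma ha _)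
        (Real.rpow_nonneg (hgnn q ω) _)
  have hBf_mono : ∀ q, Monotone (Bf q) := by
    intro q y₁ y₂ h
    simp only [hBf_def, hTI]
    have hz₁ : 0 ≤ w q * m y₁ := mul_nonneg (hw q).le (hm_nonneg y₁)
    have hz₂ : 0 ≤ w q * m y₂ := mul_nonneg (hw q).le (hm_nonneg y₂)
    have hz12 : w q * m y₁ ≤ w q * m y₂ := mul_le_mul_of_nonneg_left (hm_mono h) (hw q).le
    refine mul_le_mul (Real.rpow_le_rpow hz₁ hz12 h2α.le) ?_ ?_ (Real.rpow_nonneg hz₂ _)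
    · apply integral_mono (hTIint q _) (hTIint q _)
      intro ω
      exact mul_le_mul_of_nonneg_left
        ((lowerGamma_mono ha) (mul_le_mul_of_nonneg_right hz12 (hgnn q ω)))
        (Real.rpow_nonneg (hgnn q ω) _)
    · apply integral_nonneg
      intro ω
      exact mul_nonneg (Real.rpow_nonneg (hgnn q ω) _) (lowerGamma_nonneg _ _)
  -- clamped Zt
  set Zc : ℝ → ℝ := fun y => ∑ q : Fin T,
      (κ q * (F t : ℝ) / ((F q : ℝ) * κ t)) *
        (P q * B q / (P t * B t)) ^ (2 / α) *
        (((F q : ℝ) - 1) + A q y + Bf q y) with hZc_def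
  have hZc_meas : Measurable Zc := by
    rw [hZc_def]
    apply Finset.measurable_sum
    intro q _
    exact ((((hA_anti q).measurable.const_add _).add (hBf_mono q).measurable).const_mul _)
  have hZc_eq : ∀ y : ℝ, 0 < y → Zc y = Zt y := by
    intro y hy
    rw [hZc_def, hZt y]
    simp only [hA_def, hBf_def, hm_eq y hy, hw_def]

  -- ξ-integral machinery
  have hdom : ∀ {b : ℝ}, 0 < b →
      IntegrableOn (fun ξ : ℝ => ξ ^ (α / 2 - 1) * Real.exp (-(b * ξ))) (Ioi 0) := by
    intro b hb
    have h := integrableOn_rpow_mul_exp_neg_mul_rpow (p := 1) (s := α / 2 - 1)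
      (by linarith) zero_lt_one hb
    exact h.congr_fun (fun ξ _ => by simp only [Real.rpow_one, neg_mul]) measurableSet_Ioi
  have hmeasI : ∀ b y : ℝ, Measurable (fun ξ : ℝ =>
      ξ ^ (α / 2 - 1) * Real.exp (-(b * ξ)) * Real.exp (-(y * ξ ^ (α / 2)))) := by
    intro b y
    have h1 : Measurable fun ξ : ℝ => ξ ^ (α / 2 - 1) :=
      (Real.continuous_rpow_const (by linarith)).measurable
    have h2 : Measurable fun ξ : ℝ => ξ ^ (α / 2) :=
      (Real.continuous_rpow_const hp0.le).measurable
    exact (h1.mul ((measurable_id.const_mul b).neg.exp)).mul ((h2.const_mul y).neg.exp)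
  have hIint : ∀ {b y : ℝ}, 0 < b → 0 ≤ y → IntegrableOn
      (fun ξ : ℝ => ξ ^ (α / 2 - 1) * Real.exp (-(b * ξ)) * Real.exp (-(y * ξ ^ (α / 2))))
      (Ioi 0) := by
    intro b y hb hy
    refine Integrable.mono' (hdom hb) (hmeasI b y).aestronglyMeasurable ?_
    filter_upwards [ae_restrict_mem measurableSet_Ioi] with ξ hξ
    have hξ0 : (0:ℝ) < ξ := hξ
    rw [Real.norm_eq_abs, abs_of_nonneg (by positivity)]
    calc ξ ^ (α / 2 - 1) * Real.exp (-(b * ξ)) * Real.exp (-(y * ξ ^ (α / 2)))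
        ≤ ξ ^ (α / 2 - 1) * Real.exp (-(b * ξ)) * 1 := by
          apply mul_le_mul_of_nonneg_left
            (Real.exp_le_one_iff.2 (neg_nonpos.2 (mul_nonneg hy (Real.rpow_nonneg hξ0.le _))))
            (by positivity)
      _ = ξ ^ (α / 2 - 1) * Real.exp (-(b * ξ)) := by rw [mul_one]
  have hInn : ∀ b y : ℝ, 0 ≤ ∫ ξ in Ioi (0:ℝ),
      ξ ^ (α / 2 - 1) * Real.exp (-(b * ξ)) * Real.exp (-(y * ξ ^ (α / 2))) := by
    intro b y
    apply setIntegral_nonneg measurableSet_Ioi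
    intro ξ hξ
    have hξ0 : (0:ℝ) < ξ := hξ
    positivity
  have hIle : ∀ {b y : ℝ}, 0 < b → 0 ≤ y →
      (∫ ξ in Ioi (0:ℝ), ξ ^ (α / 2 - 1) * Real.exp (-(b * ξ)) * Real.exp (-(y * ξ ^ (α / 2))))
        ≤ (1 / b) ^ (α / 2) * Real.Gamma (α / 2) := by
    intro b y hb hy
    calc (∫ ξ in Ioi (0:ℝ), ξ ^ (α/2-1) * Real.exp (-(b * ξ)) * Real.exp (-(y * ξ ^ (α/2))))
        ≤ ∫ ξ in Ioi (0:ℝ), ξ ^ (α/2-1) * Real.exp (-(b * ξ)) := by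
          apply setIntegral_mono_on (hIint hb hy) (hdom hb) measurableSet_Ioi
          intro ξ hξ
          have hξ0 : (0:ℝ) < ξ := hξ
          calc ξ ^ (α / 2 - 1) * Real.exp (-(b * ξ)) * Real.exp (-(y * ξ ^ (α / 2)))
              ≤ ξ ^ (α / 2 - 1) * Real.exp (-(b * ξ)) * 1 := by
                apply mul_le_mul_of_nonneg_left
                  (Real.exp_le_one_iff.2 (neg_nonpos.2
                    (mul_nonneg hy (Real.rpow_nonneg hξ0.le _)))) (by positivity)
            _ = ξ ^ (α / 2 - 1) * Real.exp (-(b * ξ)) := by rw [mul_one]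
      _ = (1 / b) ^ (α / 2) * Real.Gamma (α / 2) :=
          Real.integral_rpow_mul_exp_neg_mul_Ioi hp0 hb
  have hIanti : ∀ {b₁ b₂ y : ℝ}, 0 < b₁ → b₁ ≤ b₂ → 0 ≤ y →
      (∫ ξ in Ioi (0:ℝ), ξ ^ (α/2-1) * Real.exp (-(b₂ * ξ)) * Real.exp (-(y * ξ ^ (α/2))))
        ≤ ∫ ξ in Ioi (0:ℝ), ξ ^ (α/2-1) * Real.exp (-(b₁ * ξ)) * Real.exp (-(y * ξ ^ (α/2))) := by
    intro b₁ b₂ y h1 h12 hy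
    apply setIntegral_mono_on (hIint (h1.trans_le h12) hy) (hIint h1 hy) measurableSet_Ioi
    intro ξ hξ
    have hξ0 : (0:ℝ) < ξ := hξ
    apply mul_le_mul_of_nonneg_right _ (Real.exp_pos _).le
    apply mul_le_mul_of_nonneg_left _ (Real.rpow_nonneg hξ0.le _)
    exact Real.exp_le_exp.2 (neg_le_neg (mul_le_mul_of_nonneg_right h12 hξ0.le))
  -- facts about Gt
  have hbpos : ∀ lam y : ℝ, 0 < lam → 0 < π * (κ t * lam / (F t : ℝ)) * Zt y := by
    intro lam y hlam
    have h1 := hZtpos y; have h2 := hκ t; have h3 := hFq t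
    positivity
  have hcoeff : ∀ y : ℝ, 0 < y → 0 ≤ α / 2 * (y / Zt y) := by
    intro y hy
    have h1 := hZtpos y
    positivity
  have hGt_le : ∀ (y lam : ℝ), 0 < y → Gt y lam ≤ (Zt y)⁻¹ := by
    intro y lam hy
    rw [hGt]
    exact sub_le_self _ (mul_nonneg (hcoeff y hy) (hInn _ _))
  have hGt_mono : ∀ y lam₁ lam₂ : ℝ, 0 < y → 0 < lam₁ → lam₁ ≤ lam₂ →
      Gt y lam₁ ≤ Gt y lam₂ := by
    intro y l1 l2 hy h1 h12
    rw [hGt, hGt]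
    apply sub_le_sub_left
    apply mul_le_mul_of_nonneg_left _ (hcoeff y hy)
    apply hIanti (hbpos l1 y h1) ?_ hy.le
    have h2 := (hZtpos y).le; have h3 := (hκ t).le; have h4 := hFq t
    gcongr
  have hGt_lower : ∀ y lam : ℝ, 0 < y → 0 < lam →
      (Zt y)⁻¹ - α / 2 * (y / Zt y) *
        ((1 / (π * (κ t * lam / (F t : ℝ)) * Zt y)) ^ (α / 2) * Real.Gamma (α / 2))
        ≤ Gt y lam := by
    intro y lam hy hlam
    rw [hGt]
    apply sub_le_sub_left
    exact mul_le_mul_of_nonneg_left (hIle (hbpos lam y hlam) hy.le) (hcoeff y hy)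
  -- the measurable lower approximations
  set H : ℕ → ℝ → ℝ≥0∞ := fun n y => ENNReal.ofReal ((1 - Mc y) *
      (((Zc y)⁻¹ - α / 2 * (y / Zc y) *
        ((1 / (π * (κ t / (F t : ℝ)) * Zc y * ((n:ℝ)+1))) ^ (α / 2) * Real.Gamma (α / 2))) / y))
    with hH_def
  have hH_meas : ∀ n : ℕ, Measurable (H n) := by
    intro n
    rw [hH_def]
    have h0 : Measurable fun y : ℝ => (Zc y)⁻¹ := hZc_meas.inv
    have h1 : Measurable fun y : ℝ => α / 2 * (y / Zc y) :=
      (measurable_id.div hZc_meas).const_mul _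
    have h2 : Measurable fun y : ℝ =>
        (1 / (π * (κ t / (F t : ℝ)) * Zc y * ((n:ℝ)+1))) ^ (α / 2) :=
      (Real.continuous_rpow_const hp0.le).measurable.comp
        (measurable_const.div ((hZc_meas.const_mul _).mul_const _))
    exact ENNReal.measurable_ofReal.comp
      ((measurable_const.sub hMc_meas).mul
        ((h0.sub (h1.mul (h2.mul_const _))).div measurable_id))
  have hZcpos : ∀ y : ℝ, 0 < y → 0 < Zc y := by
    intro y hy; rw [hZc_eq y hy]; exact hZtpos y
  have hH_mono : ∀ y : ℝ, 0 < y → Monotone fun n => H n y := by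
    intro y hy n1 n2 h
    simp only [hH_def]
    apply ENNReal.ofReal_le_ofReal
    have h1Mc : 0 ≤ 1 - Mc y := by rw [hMc_eq y hy]; exact h1M y hy
    apply mul_le_mul_of_nonneg_left _ h1Mc
    rw [div_eq_mul_inv, div_eq_mul_inv]
    apply mul_le_mul_of_nonneg_right _ (inv_nonneg.2 hy.le)
    apply sub_le_sub_left
    have hZcy := hZcpos y hy
    have hκt := hκ t; have hFt := hFq t
    apply mul_le_mul_of_nonneg_left _ (by positivity)
    apply mul_le_mul_of_nonneg_right _ (Real.Gamma_nonneg_of_nonneg hp0.le)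
    apply Real.rpow_le_rpow (by positivity) _ hp0.le
    apply one_div_le_one_div_of_le (by positivity)
    have hn12 : ((n1:ℝ)+1) ≤ ((n2:ℝ)+1) := by
      have : (n1:ℝ) ≤ (n2:ℝ) := Nat.cast_le.2 h
      linarith
    have hc : (0:ℝ) ≤ π * (κ t / (F t : ℝ)) * Zc y := by positivity
    exact mul_le_mul_of_nonneg_left hn12 hc
  have hH_tendsto : ∀ y : ℝ, 0 < y → Tendsto (fun n => H n y) atTop
      (𝓝 (ENNReal.ofReal ((1 - Mt0 (SNR t * y)) / (y * Zt y)))) := by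
    intro y hy
    have hZcy := hZcpos y hy
    have hκt := hκ t; have hFt := hFq t
    have hc : (0:ℝ) < π * (κ t / (F t : ℝ)) * Zc y := by positivity
    have hu : Tendsto (fun n : ℕ =>
        (1 / (π * (κ t / (F t : ℝ)) * Zc y * ((n:ℝ)+1))) ^ (α / 2)) atTop (𝓝 0) := by
      have h1 : Tendsto (fun n : ℕ => ((n:ℝ)+1)) atTop atTop :=
        tendsto_atTop_add_const_right _ 1 tendsto_natCast_atTop_atTop
      have h3 : Tendsto (fun x : ℝ => π * (κ t / (F t : ℝ)) * Zc y * x) atTop atTop :=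
        Tendsto.const_mul_atTop hc tendsto_id
      have h4 : Tendsto (fun z : ℝ => z ^ (-(α/2))) atTop (𝓝 0) := tendsto_rpow_neg_atTop hp0
      have h5 := (h4.comp h3).comp h1
      apply Tendsto.congr' _ h5
      filter_upwards [eventually_gt_atTop 0] with n _
      have hn1 : (0:ℝ) < (n:ℝ)+1 := by positivity
      show (π * (κ t / (F t : ℝ)) * Zc y * ((n:ℝ)+1)) ^ (-(α/2))
          = (1 / (π * (κ t / (F t : ℝ)) * Zc y * ((n:ℝ)+1))) ^ (α / 2)
      rw [one_div, Real.inv_rpow (by positivity), Real.rpow_neg (by positivity)]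
    have hreal : Tendsto (fun n : ℕ => (1 - Mc y) *
        (((Zc y)⁻¹ - α / 2 * (y / Zc y) *
          ((1 / (π * (κ t / (F t : ℝ)) * Zc y * ((n:ℝ)+1))) ^ (α / 2) * Real.Gamma (α / 2))) / y))
        atTop (𝓝 ((1 - Mc y) *
        (((Zc y)⁻¹ - α / 2 * (y / Zc y) * ((0:ℝ) * Real.Gamma (α / 2))) / y))) := by
      apply Tendsto.const_mul
      apply Tendsto.div_const
      apply Tendsto.const_sub
      apply Tendsto.const_mul
      exact hu.mul_const _
    have hfin := (ENNReal.continuous_ofReal.tendsto _).comp hreal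
    have heq : ENNReal.ofReal ((1 - Mt0 (SNR t * y)) / (y * Zt y))
        = ENNReal.ofReal ((1 - Mc y) *
          (((Zc y)⁻¹ - α / 2 * (y / Zc y) * ((0:ℝ) * Real.Gamma (α / 2))) / y)) := by
      rw [hMc_eq y hy, hZc_eq y hy, zero_mul, mul_zero, sub_zero]
      congr 1
      have hZy := (hZtpos y).ne'
      have hyne := hy.ne'
      field_simp
    rw [heq]
    simp only [hH_def]
    exact hfin
  have hH_le : ∀ (n : ℕ) (y : ℝ), 0 < y →
      H n y ≤ ENNReal.ofReal ((1 - Mt0 (SNR t * y)) * (Gt y ((n:ℝ)+1) / y)) := by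
    intro n y hy
    simp only [hH_def]
    apply ENNReal.ofReal_le_ofReal
    rw [hMc_eq y hy, hZc_eq y hy]
    apply mul_le_mul_of_nonneg_left _ (h1M y hy)
    rw [div_eq_mul_inv, div_eq_mul_inv]
    apply mul_le_mul_of_nonneg_right _ (inv_nonneg.2 hy.le)
    have hlam : (0:ℝ) < (n:ℝ)+1 := by positivity
    have h1 := hGt_lower y ((n:ℝ)+1) hy hlam
    have hb : π * (κ t * ((n:ℝ)+1) / (F t : ℝ)) * Zt y
        = π * (κ t / (F t : ℝ)) * Zt y * ((n:ℝ)+1) := by ring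
    rw [hb] at h1
    exact h1
  -- Part 1
  have part1 : ∀ lam₁ lam₂ : ℝ, 0 < lam₁ → lam₁ ≤ lam₂ → R lam₁ ≤ R lam₂ := by
    intro l1 l2 h1 h12
    rw [hR l1, hR l2]
    apply lintegral_mono_ae
    filter_upwards [ae_restrict_mem measurableSet_Ioi] with y hy
    apply ENNReal.ofReal_le_ofReal
    apply mul_le_mul_of_nonneg_left _ (h1M y hy)
    rw [div_eq_mul_inv, div_eq_mul_inv]
    exact mul_le_mul_of_nonneg_right (hGt_mono y l1 l2 hy h1 h12) (inv_nonneg.2 (le_of_lt hy))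
  -- Part 2
  have hEle : ∀ (lam y : ℝ), 0 < y → (1 - Mt0 (SNR t * y)) * (Gt y lam / y)
      ≤ (1 - Mt0 (SNR t * y)) / (y * Zt y) := by
    intro lam y hy
    have hZy := (hZtpos y).ne'
    have hyne := hy.ne'
    have h2 : (1 - Mt0 (SNR t * y)) * ((Zt y)⁻¹ / y) = (1 - Mt0 (SNR t * y)) / (y * Zt y) := by
      field_simp
    rw [← h2]
    apply mul_le_mul_of_nonneg_left _ (h1M y hy)
    rw [div_eq_mul_inv, div_eq_mul_inv]
    exact mul_le_mul_of_nonneg_right (hGt_le y lam hy) (inv_nonneg.2 hy.le)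
  have part2 : ∀ lam : ℝ, 0 < lam → R lam ≤ ∫⁻ y in Ioi (0:ℝ),
      ENNReal.ofReal ((1 - Mt0 (SNR t * y)) / (y * Zt y)) := by
    intro lam _
    rw [hR]
    apply lintegral_mono_ae
    filter_upwards [ae_restrict_mem measurableSet_Ioi] with y hy
    exact ENNReal.ofReal_le_ofReal (hEle lam y hy)
  -- Part 3
  have hS : Tendsto (fun n : ℕ => ∫⁻ y in Ioi (0:ℝ), H n y) atTop
      (𝓝 (∫⁻ y in Ioi (0:ℝ), ENNReal.ofReal ((1 - Mt0 (SNR t * y)) / (y * Zt y)))) := by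
    apply lintegral_tendsto_of_tendsto_of_monotone
    · intro n; exact (hH_meas n).aemeasurable
    · filter_upwards [ae_restrict_mem measurableSet_Ioi] with y hy
      exact hH_mono y hy
    · filter_upwards [ae_restrict_mem measurableSet_Ioi] with y hy
      exact hH_tendsto y hy
  have hSR : ∀ n : ℕ, (∫⁻ y in Ioi (0:ℝ), H n y) ≤ R ((n:ℝ)+1) := by
    intro n
    rw [hR]
    apply lintegral_mono_ae
    filter_upwards [ae_restrict_mem measurableSet_Ioi] with y hy
    exact hH_le n y hy
  refine ⟨part1, part2, ?_⟩
  apply tendsto_order.2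
  constructor
  · intro b hb
    obtain ⟨n, hn⟩ := ((tendsto_order.1 hS).1 b hb).exists
    filter_upwards [eventually_ge_atTop ((n:ℝ)+1)] with lam hlam
    exact lt_of_lt_of_le hn ((hSR n).trans (part1 _ _ (by positivity) hlam))
  · intro b hb
    filter_upwards [eventually_gt_atTop (0:ℝ)] with lam hlam
    exact lt_of_le_of_lt (part2 lam hlam) hb
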